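/- The function 𝒢 is discrete harmonic for the triangular-lattice Laplacian at every point of the open quadrant: for all integers x ≥ 1 and y ≥ 1, 𝒢(x,y) = (1/3)·( 𝒢(x+1, y) + 𝒢(x−1, y+1) + 𝒢(x, y−1) ). -/

import Mathlib

open intervalIntegral Real Complex

/-- `u(t) = (−1 + i√(4t−1))/(2t)`. -/
noncomputable def uu (t : ℝ) : ℂ :=
  (-1 + Complex.I * (Real.sqrt (4 * t - 1) : ℝ)) / (2 * t)

/-- The renormalized Green's function of the triangular-lattice walk:
`𝒢(x,y) = (3/π) ∫_{1/4}^{1} (4t−1)^{−1/2} ( t^y Σ_{j=1}^{x} C(x,j)(1−t)^{j−1} Re(u(t)^j)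
  − Σ_{ℓ=0}^{y−1} t^ℓ ) dt`. -/
noncomputable def calG (x y : ℕ) : ℝ :=
  (3 / Real.pi) * ∫ t in (1/4 : ℝ)..1,
    (1 / Real.sqrt (4 * t - 1)) *
      (t ^ y * ∑ j ∈ Finset.Icc 1 x, (x.choose j : ℝ) * (1 - t) ^ (j - 1) * ((uu t) ^ j).re
        - ∑ l ∈ Finset.range y, t ^ l)

namespace CalGAux

open Finset MeasureTheory

lemma sum_Icc_one (n : ℕ) (f : ℕ → ℂ) :
    ∑ j ∈ Finset.Icc 1 n, f j = ∑ k ∈ Finset.range n, f (k+1) := by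
  rw [← Finset.Ico_add_one_right_eq_Icc, Finset.sum_Ico_eq_sum_range]
  simp [add_comm]

lemma Sc_succ (w u : ℂ) (x : ℕ) :
    ∑ j ∈ Finset.Icc 1 (x+1), ((x+1).choose j : ℂ) * w ^ (j-1) * u ^ j
      = (∑ j ∈ Finset.Icc 1 x, (x.choose j : ℂ) * w ^ (j-1) * u ^ j) + u * (1 + w*u) ^ x := by
  rw [sum_Icc_one, sum_Icc_one]
  simp only [Nat.add_sub_cancel]
  have h : ∀ k ∈ Finset.range (x+1), ((x+1).choose (k+1) : ℂ) * w ^ k * u ^ (k+1)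
      = (x.choose k : ℂ) * w ^ k * u ^ (k+1) + (x.choose (k+1) : ℂ) * w ^ k * u ^ (k+1) := by
    intro k _
    rw [Nat.choose_succ_succ]
    push_cast
    ring
  rw [Finset.sum_congr rfl h, Finset.sum_add_distrib, add_comm]
  congr 1
  · rw [Finset.sum_range_succ]
    simp [Nat.choose_succ_self]
  · rw [add_comm (1:ℂ), add_pow]
    rw [Finset.mul_sum]
    apply Finset.sum_congr rfl
    intro k _
    simp
    ring

lemma Sc_binom (w u : ℂ) (x : ℕ) :
    w * ∑ j ∈ Finset.Icc 1 x, (x.choose j : ℂ) * w ^ (j-1) * u ^ j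
      = (1 + w*u) ^ x - 1 := by
  induction x with
  | zero => simp
  | succ n ih =>
    rw [Sc_succ, mul_add, ih, pow_succ]
    ring

lemma uu_quad {t : ℝ} (ht : 1/4 ≤ t) :
    (t:ℂ) * (uu t)^2 + uu t + 1 = 0 := by
  have ht0 : (0:ℝ) < t := by linarith
  have htC : (t:ℂ) ≠ 0 := by exact_mod_cast ht0.ne'
  have hs : (Real.sqrt (4*t-1) : ℝ)^2 = 4*t-1 := Real.sq_sqrt (by linarith)
  have hsC : ((Real.sqrt (4*t-1) : ℝ) : ℂ)^2 = 4*(t:ℂ)-1 := by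
    rw [← Complex.ofReal_pow, hs]; push_cast; ring
  rw [uu]
  field_simp
  linear_combination (Complex.I^2) * hsC +
    (4*(t:ℂ)-1) * Complex.I_sq

/-- complex version of the sums appearing in `calG` -/
noncomputable def Sc (t : ℝ) (x : ℕ) : ℂ :=
  ∑ j ∈ Finset.Icc 1 x, (x.choose j : ℂ) * (1-(t:ℂ)) ^ (j-1) * (uu t) ^ j

noncomputable def Tt (t : ℝ) (y : ℕ) : ℂ := ∑ l ∈ Finset.range y, (t:ℂ) ^ l

lemma key_c {t : ℝ} (ht : 1/4 ≤ t) (a b : ℕ) :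
    3 * ((t:ℂ)^(b+1) * Sc t (a+1) - Tt t (b+1))
      = ((t:ℂ)^(b+1) * Sc t (a+2) - Tt t (b+1))
      + ((t:ℂ)^(b+2) * Sc t a - Tt t (b+2))
      + ((t:ℂ)^b * Sc t (a+1) - Tt t b) := by
  have h1 := Sc_succ (1-(t:ℂ)) (uu t) (a+1)
  have h2 := Sc_succ (1-(t:ℂ)) (uu t) a
  have hA := Sc_binom (1-(t:ℂ)) (uu t) (a+1)
  have hq := uu_quad ht
  have hT2 : Tt t (b+2) = Tt t (b+1) + (t:ℂ)^(b+1) := Finset.sum_range_succ _ _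
  have hT1 : Tt t (b+1) = Tt t b + (t:ℂ)^b := Finset.sum_range_succ _ _
  simp only [Sc] at *
  linear_combination (-(t:ℂ)^(b+1)) * h1 + (t:ℂ)^(b+2) * h2
    + (-(t:ℂ)^b*(1-(t:ℂ))) * hA
    + (-(t:ℂ)^b*(1-(t:ℂ))*(1+(1-(t:ℂ))*uu t)^a) * hq + hT2 - hT1

/-- the inner (real) part of the integrand -/
noncomputable def hh (x y : ℕ) (t : ℝ) : ℝ :=
  t ^ y * ∑ j ∈ Finset.Icc 1 x, (x.choose j : ℝ) * (1 - t) ^ (j - 1) * ((uu t) ^ j).re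
    - ∑ l ∈ Finset.range y, t ^ l

lemma hh_eq_re (x y : ℕ) (t : ℝ) :
    hh x y t = ((t:ℂ)^y * Sc t x - Tt t y).re := by
  rw [hh, Sc, Tt, Complex.sub_re]
  congr 1
  · rw [Finset.mul_sum, Finset.mul_sum, Complex.re_sum]
    apply Finset.sum_congr rfl
    intro j _
    have : (t:ℂ)^y * ((x.choose j : ℂ) * (1-(t:ℂ)) ^ (j-1) * (uu t) ^ j)
        = ((t^y * ((x.choose j : ℝ) * (1 - t) ^ (j - 1)) : ℝ) : ℂ) * (uu t) ^ j := by
      push_cast; ring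
    rw [this, Complex.re_ofReal_mul]
    ring
  · rw [Complex.re_sum]
    apply Finset.sum_congr rfl
    intro l _
    rw [← Complex.ofReal_pow, Complex.ofReal_re]

/-- the full integrand -/
noncomputable def fI (x y : ℕ) (t : ℝ) : ℝ :=
  (1 / Real.sqrt (4 * t - 1)) *
    (t ^ y * ∑ j ∈ Finset.Icc 1 x, (x.choose j : ℝ) * (1 - t) ^ (j - 1) * ((uu t) ^ j).re
      - ∑ l ∈ Finset.range y, t ^ l)

lemma key_r {t : ℝ} (ht : 1/4 ≤ t) (a b : ℕ) :
    3 * fI (a+1) (b+1) t = fI (a+2) (b+1) t + fI a (b+2) t + fI (a+1) b t := by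
  have h' : 3 * hh (a+1) (b+1) t = hh (a+2) (b+1) t + hh a (b+2) t + hh (a+1) b t := by
    have := congrArg Complex.re (key_c ht a b)
    rw [show ((3:ℂ) * ((t:ℂ)^(b+1) * Sc t (a+1) - Tt t (b+1))) =
        (((3:ℝ)):ℂ) * ((t:ℂ)^(b+1) * Sc t (a+1) - Tt t (b+1)) by norm_num,
      Complex.re_ofReal_mul, Complex.add_re, Complex.add_re] at this
    rw [hh_eq_re, hh_eq_re, hh_eq_re, hh_eq_re]
    exact this
  have hhh : ∀ u v : ℕ, fI u v t = (1 / Real.sqrt (4 * t - 1)) * hh u v t := fun _ _ => rfl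
  simp only [hhh]
  linear_combination (1 / Real.sqrt (4*t-1)) * h'

lemma integ_sqrt : IntervalIntegrable (fun t : ℝ => 1 / Real.sqrt (4*t-1))
    volume (1/4) 1 := by
  have I1 : IntervalIntegrable (fun s : ℝ => s ^ (-(1/2) : ℝ)) volume 0 3 :=
    intervalIntegral.intervalIntegrable_rpow' (by norm_num)
  have I2 := I1.comp_sub_right 1
  have I3 := I2.comp_mul_left (c := 4) (h := enorm_ne_top) (h' := enorm_ne_top)
  norm_num at I3
  apply I3.congr_ae
  rw [Filter.EventuallyEq, ae_restrict_iff' measurableSet_uIoc]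
  refine ae_of_all _ fun t ht => ?_
  rw [Set.uIoc_of_le (by norm_num : (1/4:ℝ) ≤ 1)] at ht
  have h1 : (0:ℝ) < 4*t-1 := by have := ht.1; linarith
  rw [Real.sqrt_eq_rpow, Real.rpow_neg h1.le]
  exact (one_div _).symm

lemma cont_uu : ContinuousOn uu (Set.uIcc (1/4 : ℝ) 1) := by
  apply ContinuousOn.div
  · exact (by continuity : Continuous fun t : ℝ =>
      (-1 + Complex.I * (Real.sqrt (4 * t - 1) : ℝ) : ℂ)).continuousOn
  · exact (by continuity : Continuous fun t : ℝ => (2 * (t:ℝ) : ℂ)).continuousOn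
  · intro t ht
    rw [Set.uIcc_of_le (by norm_num : (1/4:ℝ) ≤ 1)] at ht
    have : (0:ℝ) < t := by have := ht.1; linarith
    simp only [ne_eq, mul_eq_zero]
    push_neg
    exact ⟨by norm_num, by exact_mod_cast this.ne'⟩

lemma cont_hh (x y : ℕ) : ContinuousOn (hh x y) (Set.uIcc (1/4 : ℝ) 1) := by
  apply ContinuousOn.sub
  · apply ContinuousOn.mul
    · exact (continuous_pow y).continuousOn
    · apply continuousOn_finset_sum
      intro j _
      apply ContinuousOn.mul
      · exact (by continuity : Continuous fun t : ℝ =>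
          (x.choose j : ℝ) * (1 - t) ^ (j - 1)).continuousOn
      · exact Complex.continuous_re.comp_continuousOn (cont_uu.pow j)
  · exact (by continuity : Continuous fun t : ℝ =>
      ∑ l ∈ Finset.range y, t ^ l).continuousOn

lemma integ_fI (x y : ℕ) : IntervalIntegrable (fI x y) volume (1/4) 1 :=
  integ_sqrt.mul_continuousOn (cont_hh x y)

end CalGAux

/-- `𝒢` is discrete harmonic for the triangular-lattice Laplacian at every point of the
open quadrant: for `x ≥ 1`, `y ≥ 1`,
`𝒢(x,y) = (1/3)(𝒢(x+1,y) + 𝒢(x−1,y+1) + 𝒢(x,y−1))`. -/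
theorem calG_harmonic (x y : ℕ) (hx : 1 ≤ x) (hy : 1 ≤ y) :
    calG x y = (1/3) * (calG (x+1) y + calG (x-1) (y+1) + calG x (y-1)) := by
  open CalGAux MeasureTheory in
  obtain ⟨a, rfl⟩ : ∃ a, x = a + 1 := ⟨x - 1, (Nat.succ_pred_eq_of_pos hx).symm⟩
  obtain ⟨b, rfl⟩ : ∃ b, y = b + 1 := ⟨y - 1, (Nat.succ_pred_eq_of_pos hy).symm⟩
  have hG : ∀ x y : ℕ, calG x y = (3 / Real.pi) * ∫ t in (1/4 : ℝ)..1, fI x y t :=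
    fun _ _ => rfl
  have hsimp1 : a + 1 + 1 = a + 2 := rfl
  have hsimp2 : a + 1 - 1 = a := rfl
  have hsimp3 : b + 1 - 1 = b := rfl
  rw [hsimp1, hsimp2, hsimp3, hG, hG, hG, hG]
  have hsum : (∫ t in (1/4 : ℝ)..1, fI (a+2) (b+1) t)
      + (∫ t in (1/4 : ℝ)..1, fI a (b+2) t)
      + (∫ t in (1/4 : ℝ)..1, fI (a+1) b t)
      = 3 * ∫ t in (1/4 : ℝ)..1, fI (a+1) (b+1) t := by
    rw [← intervalIntegral.integral_add (integ_fI _ _) (integ_fI _ _),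
      ← intervalIntegral.integral_add ((integ_fI _ _).add (integ_fI _ _)) (integ_fI _ _),
      ← intervalIntegral.integral_const_mul]
    apply intervalIntegral.integral_congr
    intro t ht
    rw [Set.uIcc_of_le (by norm_num : (1/4:ℝ) ≤ 1)] at ht
    exact ((key_r ht.1 a b).symm)
  linear_combination (-(3 / Real.pi)/3) * hsum
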